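/- Let v be an indeterminate, q = v². Define Chebyshev-type polynomials V_n ∈ ℤ[v,v⁻¹][x] by V_0 = 1, V_1 = x, V_n = x·V_{n−1} − V_{n−2}, and P_n = ∏_{i=0}^{n−1}(x − v^{2i+1} − v^{−2i−1}). Then for all n ≥ 0, V_n = Σ_{i=0}^{n} [n+i+1 choose 2i+1] · P_i, where [a choose b] = ({a}{a−1}⋯{a−b+1})/({b}{b−1}⋯{1}) is the balanced q-binomial coefficient with {i} = v^i − v^{−i}. -/

import Mathlib

/-- `v`, an indeterminate, as an element of the field `ℚ(v)` of rational functions. -/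
noncomputable def vv : RatFunc ℚ := RatFunc.X

/-- The balanced `q`-integer `{m} = v^m - v^{-m}`. -/
noncomputable def bk (m : ℤ) : RatFunc ℚ := vv ^ m - vv ^ (-m)

/-- The falling product `{a}_i = {a}{a-1}⋯{a-i+1}`. -/
noncomputable def bkp (a : ℤ) (i : ℕ) : RatFunc ℚ := ∏ j ∈ Finset.range i, bk (a - j)

/-- The balanced factorial `{n}! = {n}{n-1}⋯{1}`. -/
noncomputable def bfact (n : ℕ) : RatFunc ℚ := bkp n n

/-- The balanced binomial coefficient `[a choose b] = {a}_b / {b}!`. -/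
noncomputable def bbinom (a : ℤ) (b : ℕ) : RatFunc ℚ := bkp a b / bfact b

/-- Chebyshev-type polynomials `V_0 = 1`, `V_1 = x`, `V_n = x V_{n-1} - V_{n-2}`. -/
noncomputable def chebV : ℕ → Polynomial (RatFunc ℚ)
  | 0 => 1
  | 1 => Polynomial.X
  | (n + 2) => Polynomial.X * chebV (n + 1) - chebV n

/-- `P_n = ∏_{i=0}^{n-1} (x - v^{2i+1} - v^{-2i-1})`. -/
noncomputable def PP (n : ℕ) : Polynomial (RatFunc ℚ) :=
  ∏ i ∈ Finset.range n,
    (Polynomial.X - Polynomial.C (vv ^ (2 * i + 1) + vv ^ (-(2 * (i : ℤ) + 1))))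

lemma vv_ne_zero : vv ≠ 0 := RatFunc.X_ne_zero

lemma bk_zero : bk 0 = 0 := by simp [bk]

lemma bk_nat_ne_zero {m : ℕ} (h : 0 < m) : bk m ≠ 0 := by
  obtain ⟨k, rfl⟩ := Nat.exists_eq_add_of_lt h
  intro hc
  have h1 : vv ^ ((0 + k + 1 : ℕ) : ℤ) = vv ^ (-((0 + k + 1 : ℕ) : ℤ)) := by
    have := sub_eq_zero.mp hc
    exact this
  have h2 : vv ^ ((2 * (k + 1) : ℕ)) = 1 := by
    have := congrArg (· * vv ^ (((0 + k + 1 : ℕ)) : ℤ)) h1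
    simp only [← zpow_add₀ vv_ne_zero, neg_add_cancel, zpow_zero] at this
    have h3 : ((0 + k + 1 : ℕ) : ℤ) + ((0 + k + 1 : ℕ) : ℤ) = ((2 * (k+1) : ℕ) : ℤ) := by
      push_cast; ring
    rw [h3, zpow_natCast] at this
    exact this
  have h4 : (Polynomial.X : Polynomial ℚ) ^ (2 * (k + 1)) = 1 := by
    apply RatFunc.algebraMap_injective ℚ
    simpa [vv, RatFunc.algebraMap_X] using h2
  have := congrArg Polynomial.natDegree h4
  simp [Polynomial.natDegree_X_pow] at this

lemma bk_int_ne_zero {m : ℤ} (h : 0 < m) : bk m ≠ 0 := by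
  lift m to ℕ using h.le with k
  exact bk_nat_ne_zero (by exact_mod_cast h)

lemma bfact_ne_zero (n : ℕ) : bfact n ≠ 0 := by
  rw [bfact, bkp]
  rw [Finset.prod_ne_zero_iff]
  intro j hj
  rw [Finset.mem_range] at hj
  apply bk_int_ne_zero
  omega

lemma bkp_succ (a : ℤ) (b : ℕ) : bkp a (b + 1) = bkp a b * bk (a - b) :=
  Finset.prod_range_succ _ _

lemma bkp_succ' (a : ℤ) (b : ℕ) : bkp a (b + 1) = bkp (a - 1) b * bk a := by
  rw [bkp, Finset.prod_range_succ']
  simp only [Nat.cast_zero, sub_zero, bkp]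
  congr 1
  apply Finset.prod_congr rfl
  intro j _
  congr 1
  push_cast
  ring

lemma bfact_succ (n : ℕ) : bfact (n + 1) = bfact n * bk (n + 1) := by
  rw [bfact, show ((n+1 : ℕ) : ℤ) = (n : ℤ) + 1 by push_cast; ring]
  rw [bkp_succ']
  simp [bfact]

lemma bbinom_self (m : ℕ) : bbinom m m = 1 := div_self (bfact_ne_zero m)

lemma bbinom_zero_of_lt {a b : ℕ} (h : a < b) : bbinom a b = 0 := by
  rw [bbinom, bkp]
  rw [Finset.prod_eq_zero (Finset.mem_range.2 h), zero_div]
  simp [bk_zero]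


noncomputable def cc (m : ℤ) : RatFunc ℚ := vv ^ m + vv ^ (-m)

lemma cc_neg (m : ℤ) : cc (-m) = cc m := by simp [cc, add_comm]

lemma bk_mul (x y : ℤ) : bk x * bk y = cc (x + y) - cc (x - y) := by
  have hv := vv_ne_zero
  simp only [bk, cc, zpow_add₀ hv, zpow_sub₀ hv, zpow_neg, neg_add, neg_sub, mul_inv, inv_inv,
    div_eq_mul_inv]
  ring

lemma cc_mul (x y : ℤ) : cc x * cc y = cc (x + y) + cc (x - y) := by
  have hv := vv_ne_zero
  simp only [cc, zpow_add₀ hv, zpow_sub₀ hv, zpow_neg, neg_add, neg_sub, mul_inv, inv_inv,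
    div_eq_mul_inv]
  ring

lemma core (a k : ℤ) :
    bk (a + 1) * bk a + bk (a - k + 1) * bk (a - k)
      = bk k * bk (k - 1) + (vv ^ k + vv ^ (-k)) * (bk a * bk (a - k + 1)) := by
  have h1 : bk (a + 1) * bk a = cc (2*a+1) - cc 1 := by
    rw [bk_mul, show a + 1 + a = 2*a+1 by ring, show a + 1 - a = 1 by ring]
  have h2 : bk (a - k + 1) * bk (a - k) = cc (2*a - 2*k + 1) - cc 1 := by
    rw [bk_mul, show a - k + 1 + (a - k) = 2*a-2*k+1 by ring,
      show a - k + 1 - (a - k) = 1 by ring]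
  have h3 : bk k * bk (k - 1) = cc (2*k-1) - cc 1 := by
    rw [bk_mul, show k + (k-1) = 2*k-1 by ring, show k - (k-1) = 1 by ring]
  have h4 : bk a * bk (a - k + 1) = cc (2*a - k + 1) - cc (k - 1) := by
    rw [bk_mul, show a + (a-k+1) = 2*a-k+1 by ring, show a - (a-k+1) = k-1 by ring]
  have h5 : cc k * cc (2*a-k+1) = cc (2*a+1) + cc (2*a - 2*k + 1) := by
    rw [cc_mul, show k + (2*a-k+1) = 2*a+1 by ring,
      show k - (2*a-k+1) = -(2*a-2*k+1) by ring, cc_neg]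
  have h6 : cc k * cc (k-1) = cc (2*k-1) + cc 1 := by
    rw [cc_mul, show k+(k-1)=2*k-1 by ring, show k - (k-1) = 1 by ring]
  have hck : vv ^ k + vv ^ (-k) = cc k := rfl
  rw [h1, h2, h3, hck, h4]
  linear_combination h6 - h5

lemma brec (a : ℤ) (K : ℕ) :
    bbinom (a + 1) (K + 2) + bbinom (a - 1) (K + 2)
      = bbinom (a - 1) K
        + (vv ^ ((K : ℤ) + 2) + vv ^ (-((K : ℤ) + 2))) * bbinom a (K + 2) := by
  have hc := core a ((K : ℤ) + 2)
  rw [show (K:ℤ) + 2 - 1 = (K:ℤ) + 1 by ring] at hc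
  have f1 : bkp (a + 1) (K + 2) = bkp (a - 1) K * (bk (a + 1) * bk a) := by
    rw [show K + 2 = (K + 1) + 1 by ring, bkp_succ' (a+1) (K+1),
      show a + 1 - 1 = a by ring, bkp_succ' a K]
    ring
  have f2 : bkp (a - 1) (K + 2)
      = bkp (a - 1) K * (bk (a - ((K:ℤ)+2) + 1) * bk (a - ((K:ℤ)+2))) := by
    rw [show K + 2 = (K + 1) + 1 by ring, bkp_succ (a-1) (K+1), bkp_succ (a-1) K,
      show a - 1 - (K:ℤ) = a - ((K:ℤ)+2) + 1 by ring,
      show a - 1 - ((K+1 : ℕ):ℤ) = a - ((K:ℤ)+2) by push_cast; ring]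
    ring
  have f3 : bkp a (K + 2) = bkp (a - 1) K * (bk (a - ((K:ℤ)+2) + 1) * bk a) := by
    rw [show K + 2 = (K + 1) + 1 by ring, bkp_succ' a (K+1), bkp_succ (a-1) K,
      show a - 1 - (K:ℤ) = a - ((K:ℤ)+2) + 1 by ring]
    ring
  have f4 : bfact (K + 2) = bfact K * (bk ((K:ℤ)+2) * bk ((K:ℤ)+1)) := by
    rw [show K + 2 = (K + 1) + 1 by ring, bfact_succ (K+1), bfact_succ K,
      show ((K+1:ℕ):ℤ) + 1 = (K:ℤ)+2 by push_cast; ring]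
    ring
  have h1 : bk ((K:ℤ)+2) ≠ 0 := bk_int_ne_zero (by omega)
  have h2 : bk ((K:ℤ)+1) ≠ 0 := bk_int_ne_zero (by omega)
  have h3 : bfact K ≠ 0 := bfact_ne_zero K
  rw [bbinom, bbinom, bbinom, bbinom, f1, f2, f3, f4]
  set u := vv ^ ((K : ℤ) + 2) with hu
  set w := vv ^ (-((K : ℤ) + 2)) with hw
  field_simp
  linear_combination (bkp (a - 1) K) * hc

lemma cc_mul_bk (x y : ℤ) : cc x * bk y = bk (x + y) + bk (y - x) := by
  have hv := vv_ne_zero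
  simp only [cc, bk, zpow_add₀ hv, zpow_sub₀ hv, zpow_neg, neg_add, neg_sub, mul_inv, inv_inv,
    div_eq_mul_inv]
  ring

lemma bkp_one (a : ℤ) : bkp a 1 = bk a := by simp [bkp]

lemma bfact_one : bfact 1 = bk 1 := by
  rw [bfact, show ((1:ℕ):ℤ) = 1 by norm_num, bkp_one]

lemma rec0 (m : ℤ) :
    bbinom (m + 2) 1 = (vv ^ (1:ℕ) + vv ^ (-(1:ℤ))) * bbinom (m + 1) 1 - bbinom m 1 := by
  have h1 : bk (1:ℤ) ≠ 0 := bk_int_ne_zero one_pos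
  have h5 : cc 1 * bk (m + 1) = bk (m + 2) + bk m := by
    rw [cc_mul_bk, show (1:ℤ) + (m + 1) = m + 2 by ring, show m + 1 - 1 = m by ring]
  have hc : vv ^ (1:ℕ) + vv ^ (-(1:ℤ)) = cc 1 := by
    rw [cc]; norm_num
  rw [hc, bbinom, bbinom, bbinom, bkp_one, bkp_one, bkp_one, bfact_one]
  field_simp
  linear_combination -h5


lemma PP_succ (i : ℕ) :
    PP (i + 1) = PP i * (Polynomial.X - Polynomial.C (vv ^ (2 * i + 1) + vv ^ (-(2 * (i : ℤ) + 1)))) :=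
  Finset.prod_range_succ _ i

noncomputable def gfun (m : ℕ) : ℕ → Polynomial (RatFunc ℚ)
  | 0 => 0
  | (j + 1) => Polynomial.C (bbinom ((m : ℤ) + j + 1) (2 * j + 1)) * PP (j + 1)

theorem stmt3 (n : ℕ) :
    chebV n = ∑ i ∈ Finset.range (n + 1),
      Polynomial.C (bbinom ((n : ℤ) + i + 1) (2 * i + 1)) * PP i := by
  induction n using Nat.twoStepInduction with
  | zero =>
    rw [Finset.sum_range_one]
    have h1 : bbinom (((0:ℕ) : ℤ) + ((0:ℕ) : ℤ) + 1) (2 * 0 + 1) = 1 := by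
      have := bbinom_self 1
      norm_num at this ⊢
      exact this
    rw [h1]
    simp [chebV, PP]
  | one =>
    rw [Finset.sum_range_succ, Finset.sum_range_one]
    have h1 : bbinom (((1:ℕ) : ℤ) + ((1:ℕ) : ℤ) + 1) (2 * 1 + 1) = 1 := by
      have := bbinom_self 3
      norm_num at this ⊢
      exact this
    have h2 : bbinom (((1:ℕ) : ℤ) + ((0:ℕ) : ℤ) + 1) (2 * 0 + 1) = cc 1 := by
      have hk : bk (1:ℤ) ≠ 0 := bk_int_ne_zero one_pos
      have h5 : cc 1 * bk (1 : ℤ) = bk 2 := by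
        rw [cc_mul_bk]
        norm_num [bk_zero]
      rw [show ((1:ℕ):ℤ) + ((0:ℕ):ℤ) + 1 = 2 by norm_num, show 2*0+1 = 1 by norm_num,
        bbinom, bkp_one, bfact_one, div_eq_iff hk]
      exact h5.symm
    rw [h1, h2]
    have hPP1 : PP 1 = Polynomial.X - Polynomial.C (vv ^ (2*0+1) + vv ^ (-(2*((0:ℕ):ℤ)+1))) := by
      rw [PP, Finset.prod_range_one]
    rw [hPP1]
    have hcc : (vv ^ (2*0+1) + vv ^ (-(2*((0:ℕ):ℤ)+1))) = cc 1 := by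
      norm_num [cc]
    rw [hcc]
    show Polynomial.X = _
    simp [PP]
  | more n ih1 ih2 =>
    rw [chebV, ih1, ih2, Finset.mul_sum]
    have hXs : ∑ i ∈ Finset.range (n+1+1),
          Polynomial.X * (Polynomial.C (bbinom (((n+1:ℕ):ℤ) + i + 1) (2*i+1)) * PP i)
        = (∑ i ∈ Finset.range (n+2), gfun (n+1) (i+1))
          + ∑ i ∈ Finset.range (n+2),
              Polynomial.C ((vv ^ (2*i+1) + vv ^ (-(2*(i:ℤ)+1)))
                * bbinom (((n+1:ℕ):ℤ) + i + 1) (2*i+1)) * PP i := by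
      rw [← Finset.sum_add_distrib]
      refine Finset.sum_congr rfl fun i _ => ?_
      rw [map_mul, gfun, PP_succ]
      push_cast
      ring
    rw [hXs]
    have hsh : (∑ i ∈ Finset.range (n+2), gfun (n+1) (i+1))
        = ∑ i ∈ Finset.range (n+3), gfun (n+1) i := by
      rw [Finset.sum_range_succ' (gfun (n+1)) (n+2), gfun]
      ring
    have hA : ∑ i ∈ Finset.range (n+2),
          Polynomial.C ((vv ^ (2*i+1) + vv ^ (-(2*(i:ℤ)+1)))
            * bbinom (((n+1:ℕ):ℤ) + i + 1) (2*i+1)) * PP i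
        = ∑ i ∈ Finset.range (n+3),
          Polynomial.C ((vv ^ (2*i+1) + vv ^ (-(2*(i:ℤ)+1)))
            * bbinom (((n+1:ℕ):ℤ) + i + 1) (2*i+1)) * PP i := by
      symm
      rw [Finset.sum_range_succ]
      have hz : bbinom (((n+1:ℕ):ℤ) + ((n+2:ℕ):ℤ) + 1) (2*(n+2)+1) = 0 := by
        rw [show ((n+1:ℕ):ℤ) + ((n+2:ℕ):ℤ) + 1 = ((2*n+4:ℕ):ℤ) by push_cast; ring]
        exact bbinom_zero_of_lt (by omega)
      rw [hz]
      simp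
    have hB : ∑ i ∈ Finset.range (n+1),
          Polynomial.C (bbinom ((n:ℤ) + i + 1) (2*i+1)) * PP i
        = ∑ i ∈ Finset.range (n+3),
          Polynomial.C (bbinom ((n:ℤ) + i + 1) (2*i+1)) * PP i := by
      symm
      rw [Finset.sum_range_succ, Finset.sum_range_succ]
      have hz1 : bbinom ((n:ℤ) + ((n+1:ℕ):ℤ) + 1) (2*(n+1)+1) = 0 := by
        rw [show (n:ℤ) + ((n+1:ℕ):ℤ) + 1 = ((2*n+2:ℕ):ℤ) by push_cast; ring]
        exact bbinom_zero_of_lt (by omega)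
      have hz2 : bbinom ((n:ℤ) + ((n+2:ℕ):ℤ) + 1) (2*(n+2)+1) = 0 := by
        rw [show (n:ℤ) + ((n+2:ℕ):ℤ) + 1 = ((2*n+3:ℕ):ℤ) by push_cast; ring]
        exact bbinom_zero_of_lt (by omega)
      rw [hz1, hz2]
      simp
    rw [hsh, hA, hB, ← Finset.sum_add_distrib, ← Finset.sum_sub_distrib]
    refine Finset.sum_congr rfl fun i _ => ?_
    match i with
    | 0 =>
      have hs : bbinom (((n+2:ℕ):ℤ) + ((0:ℕ):ℤ) + 1) (2*0+1)
          = (vv ^ (2*0+1) + vv ^ (-(2*((0:ℕ):ℤ)+1)))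
              * bbinom (((n+1:ℕ):ℤ) + ((0:ℕ):ℤ) + 1) (2*0+1)
            - bbinom ((n:ℤ) + ((0:ℕ):ℤ) + 1) (2*0+1) := by
        have h := rec0 ((n:ℤ) + 1)
        push_cast at h ⊢
        ring_nf at h ⊢
        linear_combination h
      rw [hs, gfun, map_sub, map_mul]
      ring
    | (j+1) =>
      have hp : (vv : RatFunc ℚ) ^ (2*(j+1)+1) = vv ^ (((2*j+1:ℕ):ℤ) + 2) := by
        rw [← zpow_natCast]
        push_cast
        ring_nf
      have hs : bbinom (((n+2:ℕ):ℤ) + ((j+1:ℕ):ℤ) + 1) (2*(j+1)+1)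
          = bbinom (((n+1:ℕ):ℤ) + (j:ℤ) + 1) (2*j+1)
            + (vv ^ (2*(j+1)+1) + vv ^ (-(2*((j+1:ℕ):ℤ)+1)))
                * bbinom (((n+1:ℕ):ℤ) + ((j+1:ℕ):ℤ) + 1) (2*(j+1)+1)
            - bbinom ((n:ℤ) + ((j+1:ℕ):ℤ) + 1) (2*(j+1)+1) := by
        have h := brec ((n:ℤ) + (j:ℤ) + 3) (2*j+1)
        rw [hp]
        push_cast at h ⊢
        ring_nf at h ⊢
        linear_combination h
      rw [hs, gfun, map_sub, map_add, map_mul]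
      ring
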